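/- Let X₁, Y₁ be finite sets and S ⊆ X₁ × Y₁. A loop in S is a sequence of distinct points (x₁,y₁),...,(x₂ₖ,y₂ₖ) in S with k ≥ 2 such that consecutive points (cyclically) alternate between sharing the first coordinate and sharing the second coordinate. Then S is good if and only if S contains no loop. -/

import Mathlib

def IsGood {X₁ Y₁ : Type*} (S : Set (X₁ × Y₁)) : Prop :=
  ∀ f : X₁ × Y₁ → ℝ, ∃ u : X₁ → ℝ, ∃ v : Y₁ → ℝ, ∀ p ∈ S, f p = u p.1 + v p.2

/-- `S` has a loop: a cyclic sequence of `2k` distinct points of `S` (`k ≥ 2`) in which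
consecutive points (cyclically) alternately share the first and the second coordinate. -/
def HasLoop {X₁ Y₁ : Type*} (S : Set (X₁ × Y₁)) : Prop :=
  ∃ k : ℕ, 2 ≤ k ∧ ∃ p : ZMod (2 * k) → X₁ × Y₁,
    Function.Injective p ∧ (∀ i, p i ∈ S) ∧
    ∀ i : ZMod (2 * k),
      if (i.val : ℕ) % 2 = 0 then (p i).1 = (p (i + 1)).1 else (p i).2 = (p (i + 1)).2

lemma hpar (k : ℕ) [NeZero (2*k)] (i : ZMod (2*k)) (m : ℕ) :
    (i + (m : ZMod (2*k))).val % 2 = (i.val + m) % 2 := by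
  rw [ZMod.val_add, ZMod.val_natCast]
  have h1 : ((i.val + m % (2*k)) % (2*k)) % 2 = (i.val + m % (2*k)) % 2 :=
    Nat.mod_mod_of_dvd _ ⟨k, rfl⟩
  have h2 : (m % (2*k)) % 2 = m % 2 := Nat.mod_mod_of_dvd _ ⟨k, rfl⟩
  omega

lemma noloop_of_good {X₁ Y₁ : Type*} (S : Set (X₁ × Y₁)) (hg : IsGood S) : ¬ HasLoop S := by
  rintro ⟨k, hk, p, hinj, hmem, halt⟩
  haveI : NeZero (2*k) := ⟨by omega⟩
  classical
  obtain ⟨u, v, huv⟩ := hg (fun q => if q = p 0 then 1 else 0)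
  set F : ZMod (2*k) → ℝ := fun i => if i = 0 then 1 else 0 with hFdef
  have hF : ∀ i, F i = u (p i).1 + v (p i).2 := by
    intro i
    have h1 := huv (p i) (hmem i)
    rw [← h1, hFdef]
    by_cases h : i = 0
    · simp [h]
    · have : p i ≠ p 0 := fun hc => h (hinj hc)
      simp [h, this]
  set E : Finset (ZMod (2*k)) := Finset.univ.filter (fun i => i.val % 2 = 0) with hE
  have key : ∀ i ∈ E, F i - F (i+1) = v (p i).2 - v (p (i+2)).2 := by
    intro i hi
    have hie : i.val % 2 = 0 := by simpa [hE] using hi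
    have h1 : (p i).1 = (p (i+1)).1 := by have := halt i; rwa [if_pos hie] at this
    have hi1 : (i+1).val % 2 ≠ 0 := by
      have := hpar k i 1; push_cast at this; omega
    have h2 : (p (i+1)).2 = (p (i+1+1)).2 := by
      have := halt (i+1); rwa [if_neg hi1] at this
    rw [show i+1+1 = i+2 by ring] at h2
    rw [hF, hF, h1, ← h2]; ring
  have sum2 : ∑ i ∈ E, (F i - F (i+1)) = 0 := by
    rw [Finset.sum_congr rfl key, Finset.sum_sub_distrib]
    have h3 : ∑ i ∈ E, v (p (i+2)).2 = ∑ i ∈ E, v (p i).2 := by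
      apply Finset.sum_equiv (Equiv.addRight (2 : ZMod (2*k)))
      · intro i
        have := hpar k i 2; push_cast at this
        simp only [hE, Finset.mem_filter, Finset.mem_univ, true_and, Equiv.coe_addRight]
        omega
      · intro i _; rfl
    rw [h3]; ring
  have sum3 : ∑ i ∈ E, (F i - F (i+1)) = 1 := by
    rw [Finset.sum_sub_distrib]
    have hA : ∑ i ∈ E, F i = 1 := by
      rw [hFdef, Finset.sum_ite_eq' E 0 (fun _ => (1:ℝ))]
      have h0 : (0 : ZMod (2*k)) ∈ E := by simp [hE]
      simp [h0]
    have hB : ∑ i ∈ E, F (i+1) = 0 := by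
      apply Finset.sum_eq_zero
      intro i hi
      have hie : i.val % 2 = 0 := by simpa [hE] using hi
      have hne : i + 1 ≠ 0 := by
        intro hc
        have := hpar k i 1; push_cast at this
        rw [hc] at this
        simp [ZMod.val_zero] at this
        omega
      simp [hFdef, hne]
    rw [hA, hB]; ring
  rw [sum2] at sum3; norm_num at sum3

section Walk
variable {X₁ Y₁ : Type*}

def adj (S : Set (X₁ × Y₁)) (a b : X₁ ⊕ Y₁) : Prop :=
  (∃ x y, (x, y) ∈ S ∧ a = .inl x ∧ b = .inr y) ∨
  (∃ x y, (x, y) ∈ S ∧ a = .inr y ∧ b = .inl x)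

lemma adj_isLeft {S : Set (X₁ × Y₁)} {a b} (h : adj S a b) : b.isLeft = !a.isLeft := by
  rcases h with ⟨x, y, _, rfl, rfl⟩ | ⟨x, y, _, rfl, rfl⟩ <;> simp

lemma adj_mem_lr {S : Set (X₁ × Y₁)} {x y} (h : adj S (.inl x) (.inr y)) : (x, y) ∈ S := by
  rcases h with ⟨x', y', hm, hx, hy⟩ | ⟨x', y', hm, hx, hy⟩
  · cases hx; cases hy; exact hm
  · cases hx
lemma adj_mem_rl {S : Set (X₁ × Y₁)} {x y} (h : adj S (.inr y) (.inl x)) : (x, y) ∈ S := by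
  rcases h with ⟨x', y', hm, hx, hy⟩ | ⟨x', y', hm, hx, hy⟩
  · cases hx
  · cases hx; cases hy; exact hm

lemma hasLoop_of_deg2 [Finite X₁] [Finite Y₁] (S : Set (X₁ × Y₁)) (hne : S.Nonempty)
    (hdeg : ∀ p ∈ S, (∃ q ∈ S, q ≠ p ∧ q.1 = p.1) ∧ (∃ q ∈ S, q ≠ p ∧ q.2 = p.2)) :
    HasLoop S := by
  classical
  obtain ⟨⟨x0, y0⟩, hp0⟩ := hne
  -- a "next vertex" function for non-backtracking walks
  have key : ∀ uv : (X₁ ⊕ Y₁) × (X₁ ⊕ Y₁), ∃ z, adj S uv.1 uv.2 → adj S uv.2 z ∧ z ≠ uv.1 := by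
    rintro ⟨u, v⟩
    by_cases h : adj S u v
    · rcases h with ⟨x, y, hxy, rfl, rfl⟩ | ⟨x, y, hxy, rfl, rfl⟩
      · obtain ⟨q, hq, hqne, hq2⟩ := (hdeg _ hxy).2
        simp only at hq2
        refine ⟨.inl q.1, fun _ => ⟨Or.inr ⟨q.1, y, ?_, rfl, rfl⟩, ?_⟩⟩
        · have h2 : (q.1, y) = q := by rw [← hq2]
          rwa [h2]
        · show Sum.inl q.1 ≠ Sum.inl x
          intro hc
          exact hqne (Prod.ext (Sum.inl.inj hc) hq2)
      · obtain ⟨q, hq, hqne, hq1⟩ := (hdeg _ hxy).1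
        simp only at hq1
        refine ⟨.inr q.2, fun _ => ⟨Or.inl ⟨x, q.2, ?_, rfl, rfl⟩, ?_⟩⟩
        · have h2 : (x, q.2) = q := by rw [← hq1]
          rwa [h2]
        · show Sum.inr q.2 ≠ Sum.inr y
          intro hc
          exact hqne (Prod.ext hq1 (Sum.inr.inj hc))
    · exact ⟨v, fun hc => absurd hc h⟩
  choose nb hnb using key
  -- the non-backtracking walk, as a sequence of consecutive vertex pairs
  let W2 : ℕ → (X₁ ⊕ Y₁) × (X₁ ⊕ Y₁) :=
    fun n => Nat.rec (Sum.inl x0, Sum.inr y0) (fun _ prev => (prev.2, nb prev)) n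
  let w : ℕ → X₁ ⊕ Y₁ := fun n => (W2 n).1
  have hW2succ : ∀ n, W2 (n + 1) = ((W2 n).2, nb (W2 n)) := fun n => rfl
  have hW2adj : ∀ n, adj S (W2 n).1 (W2 n).2 := by
    intro n
    induction n with
    | zero => exact Or.inl ⟨x0, y0, hp0, rfl, rfl⟩
    | succ n ih =>
      rw [hW2succ]
      exact (hnb (W2 n) ih).1
  have hwsucc : ∀ n, w (n + 1) = (W2 n).2 := fun n => rfl
  have hwadj : ∀ n, adj S (w n) (w (n + 1)) := by
    intro n
    rw [hwsucc]
    exact hW2adj n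
  have hnb2 : ∀ n, w (n + 2) ≠ w n := by
    intro n
    have h := (hnb (W2 n) (hW2adj n)).2
    show (W2 (n+2)).1 ≠ (W2 n).1
    rw [show (W2 (n+2)).1 = (W2 (n+1)).2 from rfl, hW2succ]
    exact h
  have hside : ∀ n, (w n).isLeft = decide (n % 2 = 0) := by
    intro n
    induction n with
    | zero => rfl
    | succ n ih =>
      rw [adj_isLeft (hwadj n), ih]
      by_cases h : n % 2 = 0
      · have h1 : (n + 1) % 2 ≠ 0 := by omega
        simp [h, h1]
      · have h1 : (n + 1) % 2 = 0 := by omega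
        simp [h, h1]
  -- pigeonhole: a repeated vertex
  have hex : ∃ d, 0 < d ∧ ∃ a, w (a + d) = w a := by
    obtain ⟨a0, b0, hab, heq⟩ := Finite.exists_ne_map_eq_of_infinite w
    rcases hab.lt_or_gt with h | h
    · exact ⟨b0 - a0, by omega, a0, by rw [show a0 + (b0 - a0) = b0 by omega]; exact heq.symm⟩
    · exact ⟨a0 - b0, by omega, b0, by rw [show b0 + (a0 - b0) = a0 by omega]; exact heq⟩
  set d0 := Nat.find hex with hd0def
  obtain ⟨hd0pos, a, ha⟩ := Nat.find_spec hex
  rw [← hd0def] at hd0pos ha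
  have hmin : ∀ d, 0 < d → d < d0 → ∀ b, w (b + d) ≠ w b := by
    intro d hd hdlt b hc
    exact Nat.find_min hex hdlt ⟨hd, b, hc⟩
  have hd0even : d0 % 2 = 0 := by
    have h1 := hside a
    have h2 := hside (a + d0)
    rw [ha, h1] at h2
    have := decide_eq_decide.mp h2
    omega
  have hd0ne2 : d0 ≠ 2 := by
    intro h
    rw [h] at ha
    exact hnb2 a ha
  obtain ⟨k, hk2, hdk⟩ : ∃ k, 2 ≤ k ∧ d0 = 2 * k := ⟨d0 / 2, by omega, by omega⟩
  haveI : NeZero (2 * k) := ⟨by omega⟩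
  haveI : Fact (1 < 2 * k) := ⟨by omega⟩
  have hwinj : ∀ i j, i < 2 * k → j < 2 * k → w (a + i) = w (a + j) → i = j := by
    intro i j hi hj hij
    by_contra hij'
    rcases Nat.lt_or_ge i j with h | h
    · exact hmin (j - i) (by omega) (by omega) (a + i)
        (by rw [show a + i + (j - i) = a + j by omega]; exact hij.symm) 
    · exact hmin (i - j) (by omega) (by omega) (a + j)
        (by rw [show a + j + (i - j) = a + i by omega]; exact hij)
  set c : ZMod (2 * k) := if a % 2 = 0 then 1 else 0 with hc
  have hcval : (a + c.val) % 2 = 1 := by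
    by_cases h : a % 2 = 0
    · rw [hc, if_pos h, ZMod.val_one]; omega
    · rw [hc, if_neg h, ZMod.val_zero]; omega
  set W : ZMod (2 * k) → X₁ ⊕ Y₁ := fun t => w (a + (t + c).val) with hW
  have hWinj : Function.Injective W := by
    intro t s hts
    have h1 := hwinj _ _ (ZMod.val_lt (t + c)) (ZMod.val_lt (s + c)) hts
    have h2 : t + c = s + c := ZMod.val_injective _ h1
    exact add_right_cancel h2
  have hWadj : ∀ t : ZMod (2 * k), adj S (W t) (W (t + 1)) := by
    intro t
    have hs : (t + 1) + c = (t + c) + 1 := by ring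
    rw [hW]
    simp only [hs]
    set s := t + c with hsdef
    by_cases h : s.val = 2 * k - 1
    · have h1 : (s + 1).val = 0 := by
        rw [ZMod.val_add, ZMod.val_one, h]
        simp [show 2 * k - 1 + 1 = 2 * k by omega]
      rw [h1, h]
      have h2 := hwadj (a + (2 * k - 1))
      rw [show a + (2 * k - 1) + 1 = a + d0 by omega, ha] at h2
      simpa using h2
    · have h1 : (s + 1).val = s.val + 1 := by
        rw [ZMod.val_add, ZMod.val_one]
        have := ZMod.val_lt s
        rw [Nat.mod_eq_of_lt (by omega)]
      rw [h1, show a + (s.val + 1) = (a + s.val) + 1 by omega]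
      exact hwadj _
  -- parity of positions along the cycle
  have hvalpar : ∀ t : ZMod (2 * k), (a + (t + c).val) % 2 = (1 + t.val) % 2 := by
    intro t
    rw [ZMod.val_add t c]
    have h1 : ((t.val + c.val) % (2 * k)) % 2 = (t.val + c.val) % 2 :=
      Nat.mod_mod_of_dvd _ ⟨k, rfl⟩
    omega
  have hshift : ∀ t : ZMod (2 * k), (t + 1).val % 2 = (t.val + 1) % 2 := by
    intro t
    have := hpar k t 1
    push_cast at this
    exact this
  have hWshape : ∀ t : ZMod (2 * k),
      (t.val % 2 = 0 → ∃ y, W t = .inr y) ∧ (t.val % 2 = 1 → ∃ x, W t = .inl x) := by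
    intro t
    have h1 := hside (a + (t + c).val)
    have h2 := hvalpar t
    constructor
    · intro ht
      have h3 : (W t).isLeft = false := by
        rw [hW]
        simp only
        rw [h1]
        simp only [decide_eq_false_iff_not]
        omega
      cases hw : W t with
      | inl x => rw [hw] at h3; simp at h3
      | inr y => exact ⟨y, rfl⟩
    · intro ht
      have h3 : (W t).isLeft = true := by
        rw [hW]
        simp only
        rw [h1]
        simp only [decide_eq_true_eq]
        omega
      cases hw : W t with
      | inl x => exact ⟨x, rfl⟩
      | inr y => rw [hw] at h3; simp at h3
  -- the loop of points
  let mk : (X₁ ⊕ Y₁) → (X₁ ⊕ Y₁) → X₁ × Y₁ := fun A B =>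
    match A, B with
    | .inl x, .inr y => (x, y)
    | .inr y, .inl x => (x, y)
    | _, _ => (x0, y0)
  set P : ZMod (2 * k) → X₁ × Y₁ := fun t => mk (W t) (W (t + 1)) with hP
  have hPeven : ∀ t : ZMod (2 * k), t.val % 2 = 0 →
      W t = .inr (P t).2 ∧ W (t + 1) = .inl (P t).1 := by
    intro t ht
    obtain ⟨y, hy⟩ := (hWshape t).1 ht
    obtain ⟨x, hx⟩ := (hWshape (t + 1)).2 (by rw [hshift]; omega)
    have : P t = (x, y) := by rw [hP]; simp only; rw [hy, hx]
    rw [this, hy, hx]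
    exact ⟨rfl, rfl⟩
  have hPodd : ∀ t : ZMod (2 * k), t.val % 2 = 1 →
      W t = .inl (P t).1 ∧ W (t + 1) = .inr (P t).2 := by
    intro t ht
    obtain ⟨x, hx⟩ := (hWshape t).2 ht
    obtain ⟨y, hy⟩ := (hWshape (t + 1)).1 (by rw [hshift]; omega)
    have : P t = (x, y) := by rw [hP]; simp only; rw [hy, hx]
    rw [this, hy, hx]
    exact ⟨rfl, rfl⟩
  have hPmem : ∀ t, P t ∈ S := by
    intro t
    have hadj := hWadj t
    by_cases ht : t.val % 2 = 0
    · obtain ⟨h1, h2⟩ := hPeven t ht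
      rw [h1, h2] at hadj
      exact adj_mem_rl hadj
    · obtain ⟨h1, h2⟩ := hPodd t (by omega)
      rw [h1, h2] at hadj
      exact adj_mem_lr hadj
  have hPalt : ∀ t : ZMod (2 * k),
      if t.val % 2 = 0 then (P t).1 = (P (t + 1)).1 else (P t).2 = (P (t + 1)).2 := by
    intro t
    by_cases ht : t.val % 2 = 0
    · rw [if_pos ht]
      have h1 := (hPeven t ht).2
      have h2 := (hPodd (t + 1) (by rw [hshift]; omega)).1
      rw [h1] at h2
      exact Sum.inl.inj h2
    · rw [if_neg ht]
      have h1 := (hPodd t (by omega)).2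
      have h2 := (hPeven (t + 1) (by rw [hshift]; omega)).1
      rw [h1] at h2
      exact Sum.inr.inj h2
  have two_ne : (2 : ZMod (2 * k)) ≠ 0 := by
    intro hc
    have : ((2 : ℕ) : ZMod (2 * k)) = 0 := by push_cast; exact hc
    have := (ZMod.natCast_eq_zero_iff 2 (2 * k)).mp this
    have := Nat.le_of_dvd (by norm_num) this
    omega
  have hPinj : Function.Injective P := by
    intro t s h
    by_cases ht : t.val % 2 = 0 <;> by_cases hs : s.val % 2 = 0
    · have h1 := (hPeven t ht).1
      have h2 := (hPeven s hs).1
      rw [h] at h1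
      exact hWinj (h1.trans h2.symm)
    · have h1 := (hPeven t ht).1
      have h2 := (hPodd s (by omega)).2
      rw [h] at h1
      have e1 : t = s + 1 := hWinj (h1.trans h2.symm)
      have h3 := (hPeven t ht).2
      have h4 := (hPodd s (by omega)).1
      rw [h] at h3
      have e2 : t + 1 = s := hWinj (h3.trans h4.symm)
      exfalso
      apply two_ne
      have : s + 2 = s + 0 := by
        rw [add_zero]
        calc s + 2 = (s + 1) + 1 := by ring
        _ = t + 1 := by rw [← e1]
        _ = s := e2
      exact add_left_cancel this
    · have h1 := (hPodd t (by omega)).2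
      have h2 := (hPeven s hs).1
      rw [h] at h1
      have e1 : t + 1 = s := hWinj (h1.trans h2.symm)
      have h3 := (hPodd t (by omega)).1
      have h4 := (hPeven s hs).2
      rw [h] at h3
      have e2 : t = s + 1 := hWinj (h3.trans h4.symm)
      exfalso
      apply two_ne
      have : s + 2 = s + 0 := by
        rw [add_zero]
        calc s + 2 = (s + 1) + 1 := by ring
        _ = t + 1 := by rw [← e2]
        _ = s := e1
      exact add_left_cancel this
    · have h1 := (hPodd t (by omega)).1
      have h2 := (hPodd s (by omega)).1
      rw [h] at h1
      exact hWinj (h1.trans h2.symm)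
  exact ⟨k, hk2, P, hPinj, hPmem, hPalt⟩
end Walk

lemma good_of_noloop {X₁ Y₁ : Type*} [Finite X₁] [Finite Y₁] :
    ∀ (n : ℕ) (S : Set (X₁ × Y₁)), S.ncard ≤ n → ¬ HasLoop S → IsGood S := by
  intro n
  induction n with
  | zero =>
    intro S hcard _ f
    have hS : S = ∅ := by
      rw [← Set.ncard_eq_zero (Set.toFinite S)]
      omega
    exact ⟨0, 0, by simp [hS]⟩
  | succ n ih =>
    intro S hcard hnl
    rcases Set.eq_empty_or_nonempty S with rfl | hne
    · intro f; exact ⟨0, 0, by simp⟩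
    have hleaf : ∃ p ∈ S, (∀ q ∈ S, q.1 = p.1 → q = p) ∨ (∀ q ∈ S, q.2 = p.2 → q = p) := by
      by_contra hc
      push_neg at hc
      apply hnl
      apply hasLoop_of_deg2 S hne
      intro p hp
      obtain ⟨h1, h2⟩ := hc p hp
      obtain ⟨q1, hq1S, hq11, hq1ne⟩ := h1
      obtain ⟨q2, hq2S, hq22, hq2ne⟩ := h2
      exact ⟨⟨q1, hq1S, hq1ne, hq11⟩, ⟨q2, hq2S, hq2ne, hq22⟩⟩
    obtain ⟨p, hpS, hp⟩ := hleaf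
    have hS' : ¬ HasLoop (S \ {p}) := by
      rintro ⟨k, hk, q, hi, hm, haq⟩
      exact hnl ⟨k, hk, q, hi, fun i => (hm i).1, haq⟩
    have hcard' : (S \ {p}).ncard ≤ n := by
      have := Set.ncard_diff_singleton_lt_of_mem hpS (Set.toFinite S)
      omega
    have hgood := ih _ hcard' hS'
    intro f
    obtain ⟨u, v, huv⟩ := hgood f
    classical
    rcases hp with hx | hy
    · refine ⟨Function.update u p.1 (f p - v p.2), v, ?_⟩
      intro q hq
      by_cases hqp : q = p
      · subst hqp
        rw [Function.update_self]
        ring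
      · have hq1 : q.1 ≠ p.1 := fun h => hqp (hx q hq h)
        rw [Function.update_of_ne hq1]
        exact huv q ⟨hq, hqp⟩
    · refine ⟨u, Function.update v p.2 (f p - u p.1), ?_⟩
      intro q hq
      by_cases hqp : q = p
      · subst hqp
        rw [Function.update_self]
        ring
      · have hq2 : q.2 ≠ p.2 := fun h => hqp (hy q hq h)
        rw [Function.update_of_ne hq2]
        exact huv q ⟨hq, hqp⟩

theorem stmt_9 {X₁ Y₁ : Type*} [Finite X₁] [Finite Y₁] (S : Set (X₁ × Y₁)) :
    IsGood S ↔ ¬ HasLoop S := by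
  constructor
  · exact noloop_of_good S
  · exact fun h => good_of_noloop S.ncard S le_rfl h
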